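/- (Global validity of the Benders optimality cut.) Fix J ∈ ℕ and, for each j = 1,…,J, matrices A_j ∈ ℝ^{m_j×M} and B_j ∈ ℝ^{m_j×N}, vectors e_j ∈ ℝ^{m_j}, c_j ∈ ℝ^M, d_j ∈ ℝ^N, a scalar f_j ∈ ℝ, and an objective vector d ∈ ℝ^N. For X ∈ ℝ^M, call Y ∈ ℝ^N feasible for X if ‖A_j X + B_j Y + e_j‖₂ ≤ c_jᵀ X + d_jᵀ Y + f_j for all j. Suppose (u_j, μ_j) ∈ ℝ^{m_j} × ℝ, j = 1,…,J, satisfies Σ_j (B_jᵀ u_j + μ_j d_j) = d and ‖u_j‖₂ ≤ μ_j for all j (note this dual feasible set does not depend on X). Then for every X ∈ ℝ^M and every Y feasible for X, dᵀ Y ≥ Σ_j (−u_jᵀ(A_j X + e_j) − μ_j(c_jᵀ X + f_j)). Consequently, for every X for which the feasible set is nonempty, the sub-problem optimal value φ(X) = inf{dᵀY : Y feasible for X} satisfies φ(X) ≥ Σ_j (−u_jᵀ(A_j X + e_j) − μ_j(c_jᵀ X + f_j)); i.e., the affine optimality cut generated from any dual feasible point is a valid lower bound on φ at every X, not only at the point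 where it was generated. -/

import Mathlib

open Matrix Finset

/-- The Euclidean norm `‖x‖₂` of a vector `x ∈ ℝᵏ`. -/
noncomputable def eNorm {k : ℕ} (x : Fin k → ℝ) : ℝ := Real.sqrt (∑ i, x i ^ 2)

lemma eNorm_eq {k : ℕ} (x : Fin k → ℝ) :
    eNorm x = ‖(WithLp.equiv 2 (Fin k → ℝ)).symm x‖ := by
  rw [EuclideanSpace.norm_eq]
  simp [eNorm, sq_abs]

lemma eNorm_nonneg {k : ℕ} (x : Fin k → ℝ) : 0 ≤ eNorm x :=
  Real.sqrt_nonneg _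

lemma neg_dot_le {k : ℕ} (v w : Fin k → ℝ) : -(eNorm v * eNorm w) ≤ v ⬝ᵥ w := by
  have h := abs_real_inner_le_norm ((WithLp.equiv 2 (Fin k → ℝ)).symm v)
      ((WithLp.equiv 2 (Fin k → ℝ)).symm w)
  rw [← eNorm_eq, ← eNorm_eq] at h
  have : v ⬝ᵥ w = (inner ℝ ((WithLp.equiv 2 (Fin k → ℝ)).symm v) ((WithLp.equiv 2 (Fin k → ℝ)).symm w) : ℝ) := by
    simp [dotProduct, PiLp.inner_apply, mul_comm]
  rw [this]
  linarith [neg_abs_le (inner ℝ ((WithLp.equiv 2 (Fin k → ℝ)).symm v) ((WithLp.equiv 2 (Fin k → ℝ)).symm w) : ℝ)]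

/-- Global validity of the Benders optimality cut: any fixed dual feasible point
`(u_j, μ_j)_j` (its feasible set does not depend on `X`) yields, for every `X` and
every `Y` feasible for `X`, `dᵀY ≥ Σ_j (−u_jᵀ(A_j X + e_j) − μ_j(c_jᵀ X + f_j))`;
hence for every `X` with nonempty feasible set the sub-problem optimal value
`φ(X)` is bounded below by the same affine cut. -/
theorem benders_cut_globally_valid (J M N : ℕ) (m : Fin J → ℕ)
    (A : ∀ j, Matrix (Fin (m j)) (Fin M) ℝ)
    (B : ∀ j, Matrix (Fin (m j)) (Fin N) ℝ)
    (e : ∀ j, Fin (m j) → ℝ) (cj : Fin J → Fin M → ℝ) (dj : Fin J → Fin N → ℝ)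
    (f : Fin J → ℝ) (d : Fin N → ℝ)
    (u : ∀ j, Fin (m j) → ℝ) (μ : Fin J → ℝ)
    (hdualEq : ∑ j, ((B j)ᵀ *ᵥ u j + μ j • dj j) = d)
    (hdualCone : ∀ j, eNorm (u j) ≤ μ j) :
    (∀ (X : Fin M → ℝ) (Y : Fin N → ℝ),
        (∀ j, eNorm ((A j) *ᵥ X + (B j) *ᵥ Y + e j) ≤ cj j ⬝ᵥ X + dj j ⬝ᵥ Y + f j) →
        d ⬝ᵥ Y ≥ ∑ j, (-(u j ⬝ᵥ ((A j) *ᵥ X + e j)) - μ j * (cj j ⬝ᵥ X + f j))) ∧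
    (∀ X : Fin M → ℝ,
        (∃ Y : Fin N → ℝ,
          ∀ j, eNorm ((A j) *ᵥ X + (B j) *ᵥ Y + e j) ≤ cj j ⬝ᵥ X + dj j ⬝ᵥ Y + f j) →
        sInf {r : ℝ | ∃ Y : Fin N → ℝ,
            (∀ j, eNorm ((A j) *ᵥ X + (B j) *ᵥ Y + e j) ≤ cj j ⬝ᵥ X + dj j ⬝ᵥ Y + f j) ∧
            r = d ⬝ᵥ Y} ≥
          ∑ j, (-(u j ⬝ᵥ ((A j) *ᵥ X + e j)) - μ j * (cj j ⬝ᵥ X + f j))) := by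
  have main : ∀ (X : Fin M → ℝ) (Y : Fin N → ℝ),
      (∀ j, eNorm ((A j) *ᵥ X + (B j) *ᵥ Y + e j) ≤ cj j ⬝ᵥ X + dj j ⬝ᵥ Y + f j) →
      d ⬝ᵥ Y ≥ ∑ j, (-(u j ⬝ᵥ ((A j) *ᵥ X + e j)) - μ j * (cj j ⬝ᵥ X + f j)) := by
    intro X Y hfeas
    rw [← hdualEq]
    have hsum : (∑ j, ((B j)ᵀ *ᵥ u j + μ j • dj j)) ⬝ᵥ Y
        = ∑ j, ((B j)ᵀ *ᵥ u j + μ j • dj j) ⬝ᵥ Y := by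
      simp only [dotProduct, Finset.sum_apply, Finset.sum_mul]
      exact Finset.sum_comm
    rw [hsum]
    apply Finset.sum_le_sum
    intro j _
    have hw := hfeas j
    set w : Fin (m j) → ℝ := (A j) *ᵥ X + (B j) *ᵥ Y + e j with hwdef
    have hdot : u j ⬝ᵥ w = u j ⬝ᵥ ((A j) *ᵥ X) + u j ⬝ᵥ ((B j) *ᵥ Y) + u j ⬝ᵥ e j := by
      simp [hwdef, dotProduct_add]
    have hBt : ((B j)ᵀ *ᵥ u j + μ j • dj j) ⬝ᵥ Y
        = u j ⬝ᵥ ((B j) *ᵥ Y) + μ j * (dj j ⬝ᵥ Y) := by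
      rw [add_dotProduct, smul_dotProduct, Matrix.mulVec_transpose,
        ← Matrix.dotProduct_mulVec]
      simp
    rw [hBt]
    have h1 := neg_dot_le (u j) w
    have h2 := eNorm_nonneg (u j)
    have h3 := eNorm_nonneg w
    have h4 := hdualCone j
    have hA : u j ⬝ᵥ ((A j) *ᵥ X + e j) = u j ⬝ᵥ ((A j) *ᵥ X) + u j ⬝ᵥ e j := by
      simp [dotProduct_add]
    have hmul : eNorm (u j) * eNorm w ≤ μ j * (cj j ⬝ᵥ X + dj j ⬝ᵥ Y + f j) :=
      mul_le_mul h4 hw h3 (le_trans h2 h4)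
    nlinarith [hmul, h1, hdot, hA]
  refine ⟨main, ?_⟩
  intro X ⟨Y0, hY0⟩
  refine le_csInf ⟨d ⬝ᵥ Y0, Y0, hY0, rfl⟩ ?_
  rintro r ⟨Y, hY, rfl⟩
  exact main X Y hY
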